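/- Let F_L, F_R : ℝ² → ℝ² be bilinear maps, i.e., F_S(u,v) = c^S₀₀ + c^S₁₀·u + c^S₀₁·v + c^S₁₁·uv with coefficient vectors c^S_{ij} ∈ ℝ², for S ∈ {L,R}. Assume F_L(0,v) = F_R(0,v) for all v ∈ ℝ (equivalently c^L₀₀ = c^R₀₀ and c^L₀₁ = c^R₀₁ =: c₂) and c₂ ≠ 0. For S ∈ {L,R}, let u_S(v) = c^S₁₀ + c^S₁₁·v (which equals the partial derivative ∂_u F_S(0,v)), and define α_S(v) = det[u_S(v), c₂] and β_S(v) = (u_S(v) · c₂)/‖c₂‖². Then α_L, α_R, β_L, β_R are polynomial functions of v of degree at most 1, and for all v ∈ ℝ: α_R(v)·u_L(v) − α_L(v)·u_R(v) + (α_L(v)·β_R(v) − α_R(v)·β_L(v))·c₂ = 0. (This is the first part of Proposition 4.1: bilinear two-patch parametrizations are analysis-suitable G¹-continuous.) -/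

import Mathlib

/-- `det[a,b] := a₁b₂ − a₂b₁` for vectors `a, b` in ℝ². -/
def det2 (a b : Fin 2 → ℝ) : ℝ := a 0 * b 1 - a 1 * b 0

/-- Euclidean inner product on ℝ². -/
def dot2 (a b : Fin 2 → ℝ) : ℝ := a 0 * b 0 + a 1 * b 1

/-- First part of Proposition 4.1: bilinear two-patch parametrizations are
analysis-suitable G¹-continuous, with gluing data `α_S = det[u_S, c₂]` and
`β_S = (u_S · c₂)/‖c₂‖²` (note `‖c₂‖² = c₂·c₂`) that are linear polynomials in `v`. -/
theorem stmt8 (cL00 cL10 cL01 cL11 cR00 cR10 cR01 cR11 : Fin 2 → ℝ)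
    (FL FR : ℝ → ℝ → (Fin 2 → ℝ))
    (hFL : ∀ u v : ℝ, FL u v = cL00 + u • cL10 + v • cL01 + (u * v) • cL11)
    (hFR : ∀ u v : ℝ, FR u v = cR00 + u • cR10 + v • cR01 + (u * v) • cR11)
    (hcomp : ∀ v : ℝ, FL 0 v = FR 0 v)
    (c2 : Fin 2 → ℝ) (hc2 : c2 = cL01) (hc2ne : c2 ≠ 0)
    (uL uR : ℝ → (Fin 2 → ℝ))
    (huL : ∀ v : ℝ, uL v = cL10 + v • cL11)
    (huR : ∀ v : ℝ, uR v = cR10 + v • cR11)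
    (αL αR βL βR : ℝ → ℝ)
    (hαL : ∀ v : ℝ, αL v = det2 (uL v) c2)
    (hαR : ∀ v : ℝ, αR v = det2 (uR v) c2)
    (hβL : ∀ v : ℝ, βL v = dot2 (uL v) c2 / dot2 c2 c2)
    (hβR : ∀ v : ℝ, βR v = dot2 (uR v) c2 / dot2 c2 c2) :
    ((∃ a b : ℝ, ∀ v, αL v = a + b * v) ∧ (∃ a b : ℝ, ∀ v, αR v = a + b * v) ∧
     (∃ a b : ℝ, ∀ v, βL v = a + b * v) ∧ (∃ a b : ℝ, ∀ v, βR v = a + b * v)) ∧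
    (∀ v : ℝ,
      αR v • uL v - αL v • uR v + (αL v * βR v - αR v * βL v) • c2 = 0) := by
  have hne : dot2 c2 c2 ≠ 0 := by
    intro h
    apply hc2ne
    have hd : c2 0 * c2 0 + c2 1 * c2 1 = 0 := h
    have h0 : c2 0 = 0 := by nlinarith [sq_nonneg (c2 0), sq_nonneg (c2 1)]
    have h1 : c2 1 = 0 := by nlinarith [sq_nonneg (c2 0), sq_nonneg (c2 1)]
    funext i
    fin_cases i
    · exact h0
    · exact h1
  constructor
  · refine ⟨⟨det2 cL10 c2, det2 cL11 c2, fun v => ?_⟩,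
      ⟨det2 cR10 c2, det2 cR11 c2, fun v => ?_⟩,
      ⟨dot2 cL10 c2 / dot2 c2 c2, dot2 cL11 c2 / dot2 c2 c2, fun v => ?_⟩,
      ⟨dot2 cR10 c2 / dot2 c2 c2, dot2 cR11 c2 / dot2 c2 c2, fun v => ?_⟩⟩ <;>
    · simp only [hαL, hαR, hβL, hβR, huL, huR, det2, dot2, Pi.add_apply, Pi.smul_apply,
        smul_eq_mul]
      have h2 : c2 1 ^ 2 + c2 0 ^ 2 ≠ 0 := by
        intro h; apply hne; show c2 0 * c2 0 + c2 1 * c2 1 = 0; linear_combination h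
      first
        | ring
        | (field_simp [h2]; ring)
  · intro v
    funext i
    fin_cases i <;>
    simp only [hαL, hαR, hβL, hβR, det2, dot2, Pi.add_apply, Pi.sub_apply,
      Pi.smul_apply, smul_eq_mul, Pi.zero_apply, Fin.isValue] <;>
    · have h2 : (c2 0 * c2 0 + c2 1 * c2 1 : ℝ) ≠ 0 := hne
      apply mul_left_cancel₀ h2
      rw [mul_zero]
      have h3 : c2 0 ^ 2 + c2 1 ^ 2 ≠ 0 := by rw [pow_two, pow_two]; exact h2
      simp only [Fin.zero_eta, Fin.mk_one]
      field_simp [h2, h3]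
      ring
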